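/- Let C be a binary doubly even self-dual code of length n₁ + n₂ containing a codeword x of weight n₁. Let C₂ (resp. C₁) be the shortened code of C on the support (resp. on the complement of the support) of x. Then C₁ and C₂ are doubly even codes containing the all-one vector, there exists an isometry f : C₁^⊥/C₁ → C₂^⊥/C₂, defined by f(x₁ + C₁) = π'(c) + C₂ where c ∈ C satisfies π(c) = x₁ (with π, π' the projections onto the complement of the support of x and onto the support of x, respectively), and D(C₁, C₂, f) is equivalent to C. -/

import Mathlib

open Finset

/-- Hamming weight of a binary vector: number of nonzero coordinates. -/
def wt {n : ℕ} (x : Fin n → ZMod 2) : ℕ := (Finset.univ.filter fun i => x i ≠ 0).card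

/-- The dual code with respect to the standard inner product. -/
def dualCode {n : ℕ} (C : Submodule (ZMod 2) (Fin n → ZMod 2)) :
    Submodule (ZMod 2) (Fin n → ZMod 2) where
  carrier := {x | ∀ y ∈ C, ∑ i, x i * y i = 0}
  add_mem' := by
    intro a b ha hb y hy
    simp only [Set.mem_setOf_eq] at *
    simp [Pi.add_apply, add_mul, Finset.sum_add_distrib, ha y hy, hb y hy]
  zero_mem' := by intro y hy; simp
  smul_mem' := by
    intro c a ha y hy
    simp only [Set.mem_setOf_eq] at *
    simp [Pi.smul_apply, smul_eq_mul, mul_assoc, ← Finset.mul_sum, ha y hy]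

/-- A code is self-dual if it equals its dual code. -/
def isSelfDual {n : ℕ} (C : Submodule (ZMod 2) (Fin n → ZMod 2)) : Prop := dualCode C = C

/-- A code is doubly even if every codeword has weight divisible by 4. -/
def isDoublyEven {n : ℕ} (C : Submodule (ZMod 2) (Fin n → ZMod 2)) : Prop :=
  ∀ x ∈ C, 4 ∣ wt x

/-- Minimum weight of a code: the smallest weight of a nonzero codeword. -/
noncomputable def minWt {n : ℕ} (C : Submodule (ZMod 2) (Fin n → ZMod 2)) : ℕ :=
  sInf {w | ∃ x ∈ C, x ≠ 0 ∧ wt x = w}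

/-- The linear map on `Fin n → ZMod 2` given by permuting coordinates. -/
def permMap {n : ℕ} (σ : Equiv.Perm (Fin n)) :
    (Fin n → ZMod 2) →ₗ[ZMod 2] (Fin n → ZMod 2) :=
  LinearMap.funLeft (ZMod 2) (ZMod 2) σ

/-- Equivalence of codes: one is obtained from the other by permuting coordinates. -/
def codeEquiv {n : ℕ} (C C' : Submodule (ZMod 2) (Fin n → ZMod 2)) : Prop :=
  ∃ σ : Equiv.Perm (Fin n), Submodule.map (permMap σ) C = C'

/-- The quotient `C^⊥ / C` (with `C` viewed inside its dual code). -/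
abbrev resQuot {n : ℕ} (C : Submodule (ZMod 2) (Fin n → ZMod 2)) :=
  ↥(dualCode C) ⧸ Submodule.comap (dualCode C).subtype C

/-- A bijective linear map `f : C₁^⊥/C₁ → C₂^⊥/C₂` is an isometry if
`q_{C₁} = q_{C₂} ∘ f`, i.e. whenever `y ∈ C₂^⊥` represents the image under `f` of the
class of `x ∈ C₁^⊥`, we have `wt x / 2 ≡ wt y / 2 (mod 2)`. -/
def IsIsometry {n₁ n₂ : ℕ} {C₁ : Submodule (ZMod 2) (Fin n₁ → ZMod 2)}
    {C₂ : Submodule (ZMod 2) (Fin n₂ → ZMod 2)}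
    (f : resQuot C₁ ≃ₗ[ZMod 2] resQuot C₂) : Prop :=
  ∀ (x : ↥(dualCode C₁)) (y : ↥(dualCode C₂)),
    f (Submodule.Quotient.mk x) = Submodule.Quotient.mk y →
      wt x.1 / 2 ≡ wt y.1 / 2 [MOD 2]

/-- The set `D(C₁, C₂, f) = {(x₁, x₂) | x₁ ∈ C₁^⊥, x₂ ∈ f(x₁ + C₁)}`. -/
def DSet {n₁ n₂ : ℕ} (C₁ : Submodule (ZMod 2) (Fin n₁ → ZMod 2))
    (C₂ : Submodule (ZMod 2) (Fin n₂ → ZMod 2))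
    (f : resQuot C₁ ≃ₗ[ZMod 2] resQuot C₂) : Set (Fin (n₁ + n₂) → ZMod 2) :=
  {z | ∃ (x : ↥(dualCode C₁)) (y : ↥(dualCode C₂)),
    f (Submodule.Quotient.mk x) = Submodule.Quotient.mk y ∧ z = Fin.append x.1 y.1}

/-- Restriction (projection) to a set of coordinates, given by an indexing function. -/
def restr {N m : ℕ} (e : Fin m → Fin N) : (Fin N → ZMod 2) →ₗ[ZMod 2] (Fin m → ZMod 2) :=
  LinearMap.funLeft (ZMod 2) (ZMod 2) e

/-- Equivalence of sets of vectors: one is obtained from the other by permuting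
coordinates. -/
def setCodeEquiv {n : ℕ} (s t : Set (Fin n → ZMod 2)) : Prop :=
  ∃ σ : Equiv.Perm (Fin n), (permMap σ) '' s = t


section Aux

lemma mem_dualCode {n : ℕ} {C : Submodule (ZMod 2) (Fin n → ZMod 2)} {x : Fin n → ZMod 2} :
    x ∈ dualCode C ↔ ∀ y ∈ C, ∑ i, x i * y i = 0 := Iff.rfl

lemma toDual_eq_sum {m : ℕ} (x y : Fin m → ZMod 2) :
    (Pi.basisFun (ZMod 2) (Fin m)).toDual x y = ∑ i, x i * y i := by
  have h := (Pi.basisFun (ZMod 2) (Fin m)).sum_repr y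
  conv_lhs => rw [← h]
  simp only [map_sum, map_smul, Pi.basisFun_repr, Module.Basis.toDual_apply_left]
  simp only [smul_eq_mul, Pi.basisFun_repr, mul_comm]

lemma dual_dual {m : ℕ} (W : Submodule (ZMod 2) (Fin m → ZMod 2)) :
    dualCode (dualCode W) = W := by
  classical
  have hsurj : Function.Surjective (Pi.basisFun (ZMod 2) (Fin m)).toDual :=
    LinearMap.range_eq_top.mp (Pi.basisFun (ZMod 2) (Fin m)).toDual_range
  have hmem : ∀ (U : Submodule (ZMod 2) (Fin m → ZMod 2)) (x : Fin m → ZMod 2),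
      x ∈ dualCode U ↔ (Pi.basisFun (ZMod 2) (Fin m)).toDual x ∈ U.dualAnnihilator := by
    intro U x
    rw [Submodule.mem_dualAnnihilator]
    simp only [mem_dualCode, toDual_eq_sum]
  ext x
  constructor
  · intro hx
    have h2 : ∀ φ ∈ W.dualAnnihilator, φ x = 0 := by
      intro φ hφ
      obtain ⟨y, rfl⟩ := hsurj φ
      have hy : y ∈ dualCode W := by rw [hmem]; exact hφ
      have h3 := mem_dualCode.mp hx y hy
      rw [toDual_eq_sum, ← h3]
      exact Finset.sum_congr rfl fun i _ => mul_comm _ _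
    have hx' : x ∈ W.dualAnnihilator.dualCoannihilator :=
      (Submodule.mem_dualCoannihilator x).mpr h2
    rwa [Subspace.dualAnnihilator_dualCoannihilator_eq] at hx'
  · intro hx
    rw [mem_dualCode]
    intro y hy
    have h3 := mem_dualCode.mp hy x hx
    rw [← h3]
    exact Finset.sum_congr rfl fun i _ => mul_comm _ _

def suppEquiv {N : ℕ} (x : Fin N → ZMod 2) :
    {i : Fin N // x i ≠ 0} ⊕ {i : Fin N // x i = 0} ≃ Fin N where
  toFun := Sum.elim Subtype.val Subtype.val
  invFun i := if h : x i = 0 then .inr ⟨i, h⟩ else .inl ⟨i, h⟩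
  left_inv := by rintro (⟨i, h⟩ | ⟨i, h⟩) <;> simp [h]
  right_inv i := by by_cases h : x i = 0 <;> simp [h]

lemma sum_split {n₁ n₂ : ℕ} {x : Fin (n₁ + n₂) → ZMod 2}
    (e₁ : Fin n₁ ≃ {i : Fin (n₁ + n₂) // x i ≠ 0})
    (e₂ : Fin n₂ ≃ {i : Fin (n₁ + n₂) // x i = 0})
    {M : Type} [AddCommMonoid M] (g : Fin (n₁ + n₂) → M) :
    ∑ i, g i = (∑ k, g (e₁ k).1) + ∑ k, g (e₂ k).1 := by
  rw [← Equiv.sum_comp (suppEquiv x) g, Fintype.sum_sum_type]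
  simp only [suppEquiv, Equiv.coe_fn_mk, Sum.elim_inl, Sum.elim_inr]
  rw [← Equiv.sum_comp e₁ (fun s => g s.1), ← Equiv.sum_comp e₂ (fun s => g s.1)]

lemma wt_eq_sum {n : ℕ} (v : Fin n → ZMod 2) :
    wt v = ∑ i, (if v i = 0 then 0 else 1 : ℕ) := by
  rw [wt, Finset.card_filter]
  exact Finset.sum_congr rfl fun i _ => by by_cases h : v i = 0 <;> simp [h]

lemma zmod2_cases : ∀ a : ZMod 2, a = 0 ∨ a = 1 := by decide

lemma zmod2_add_self : ∀ a : ZMod 2, a + a = 0 := by decide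

lemma cast_wt {n : ℕ} (v : Fin n → ZMod 2) : ((wt v : ℕ) : ZMod 2) = ∑ i, v i := by
  rw [wt_eq_sum]
  push_cast
  refine Finset.sum_congr rfl fun i _ => ?_
  rcases zmod2_cases (v i) with h | h <;> simp [h]

end Aux

set_option maxHeartbeats 1600000

/-- Let `C` be a doubly even self-dual code of length `n₁ + n₂` containing a codeword `x`
of weight `n₁`; let `C₁` (resp. `C₂`) be the shortened code of `C` on the complement of
the support (resp. on the support) of `x`, realized on `Fin n₁` (resp. `Fin n₂`) via the
enumerations `e₁` of the support and `e₂` of its complement. Then `C₁` and `C₂` are doubly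
even codes containing the all-one vector, the projections of `C` land in `C₁^⊥` and
`C₂^⊥`, and there is an isometry `f : C₁^⊥/C₁ → C₂^⊥/C₂`, given on classes by mapping the
projection of a codeword of `C` to the support of `x` to its projection to the complement,
such that `D(C₁, C₂, f)` is equivalent to `C`. -/
theorem doubly_even_self_dual_is_DSet {n₁ n₂ : ℕ}
    (C : Submodule (ZMod 2) (Fin (n₁ + n₂) → ZMod 2))
    (hSD : isSelfDual C) (hDE : isDoublyEven C)
    (x : Fin (n₁ + n₂) → ZMod 2) (hx : x ∈ C) (hwt : wt x = n₁)
    (e₁ : Fin n₁ ≃ {i : Fin (n₁ + n₂) // x i ≠ 0})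
    (e₂ : Fin n₂ ≃ {i : Fin (n₁ + n₂) // x i = 0})
    (C₁ : Submodule (ZMod 2) (Fin n₁ → ZMod 2))
    (C₂ : Submodule (ZMod 2) (Fin n₂ → ZMod 2))
    (hC₁ : C₁ = Submodule.map (restr fun k => (e₁ k).1)
      (C ⊓ LinearMap.ker (restr fun k => (e₂ k).1)))
    (hC₂ : C₂ = Submodule.map (restr fun k => (e₂ k).1)
      (C ⊓ LinearMap.ker (restr fun k => (e₁ k).1))) :
    isDoublyEven C₁ ∧ isDoublyEven C₂ ∧
    (fun _ => 1 : Fin n₁ → ZMod 2) ∈ C₁ ∧ (fun _ => 1 : Fin n₂ → ZMod 2) ∈ C₂ ∧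
    (∀ c ∈ C, restr (fun k => (e₁ k).1) c ∈ dualCode C₁ ∧
      restr (fun k => (e₂ k).1) c ∈ dualCode C₂) ∧
    ∃ f : resQuot C₁ ≃ₗ[ZMod 2] resQuot C₂, IsIsometry f ∧
      (∀ c ∈ C, ∀ (h₁ : restr (fun k => (e₁ k).1) c ∈ dualCode C₁)
          (h₂ : restr (fun k => (e₂ k).1) c ∈ dualCode C₂),
        f (Submodule.Quotient.mk ⟨restr (fun k => (e₁ k).1) c, h₁⟩)
          = Submodule.Quotient.mk ⟨restr (fun k => (e₂ k).1) c, h₂⟩) ∧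
      setCodeEquiv (DSet C₁ C₂ f) ↑C := by
  classical
  set p₁ : (Fin (n₁ + n₂) → ZMod 2) →ₗ[ZMod 2] (Fin n₁ → ZMod 2) :=
    restr (fun k => (e₁ k).1) with hp₁def
  set p₂ : (Fin (n₁ + n₂) → ZMod 2) →ₗ[ZMod 2] (Fin n₂ → ZMod 2) :=
    restr (fun k => (e₂ k).1) with hp₂def
  have hp₁ : ∀ (v : Fin (n₁ + n₂) → ZMod 2) (k), p₁ v k = v (e₁ k).1 := fun _ _ => rfl
  have hp₂ : ∀ (v : Fin (n₁ + n₂) → ZMod 2) (k), p₂ v k = v (e₂ k).1 := fun _ _ => rfl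
  have hwtsplit : ∀ v : Fin (n₁ + n₂) → ZMod 2, wt v = wt (p₁ v) + wt (p₂ v) := by
    intro v
    rw [wt_eq_sum v, wt_eq_sum (p₁ v), wt_eq_sum (p₂ v)]
    exact sum_split e₁ e₂ _
  have hdot : ∀ a b : Fin (n₁ + n₂) → ZMod 2,
      ∑ i, a i * b i = (∑ k, p₁ a k * p₁ b k) + ∑ k, p₂ a k * p₂ b k :=
    fun a b => sum_split e₁ e₂ (fun i => a i * b i)
  have hCdual : ∀ a ∈ C, ∀ b ∈ C, ∑ i, a i * b i = 0 := by
    intro a ha b hb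
    rw [← hSD] at ha
    exact ha b hb
  have hwt0 : ∀ {m : ℕ} (v : Fin m → ZMod 2), v = 0 → wt v = 0 := by
    intro m v hv; subst hv; simp [wt]
  have hmemC₁ : ∀ z, z ∈ C₁ ↔ ∃ d ∈ C, p₂ d = 0 ∧ p₁ d = z := by
    intro z; rw [hC₁]; constructor
    · rintro ⟨d, hd, rfl⟩
      have hd' : d ∈ C ∧ d ∈ LinearMap.ker _ := Submodule.mem_inf.mp hd
      exact ⟨d, hd'.1, LinearMap.mem_ker.mp hd'.2, rfl⟩
    · rintro ⟨d, hd1, hd2, rfl⟩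
      exact ⟨d, Submodule.mem_inf.mpr ⟨hd1, LinearMap.mem_ker.mpr hd2⟩, rfl⟩
  have hmemC₂ : ∀ z, z ∈ C₂ ↔ ∃ d ∈ C, p₁ d = 0 ∧ p₂ d = z := by
    intro z; rw [hC₂]; constructor
    · rintro ⟨d, hd, rfl⟩
      have hd' : d ∈ C ∧ d ∈ LinearMap.ker _ := Submodule.mem_inf.mp hd
      exact ⟨d, hd'.1, LinearMap.mem_ker.mp hd'.2, rfl⟩
    · rintro ⟨d, hd1, hd2, rfl⟩
      exact ⟨d, Submodule.mem_inf.mpr ⟨hd1, LinearMap.mem_ker.mpr hd2⟩, rfl⟩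
  have hDE₁ : isDoublyEven C₁ := by
    intro z hz
    obtain ⟨d, hd, hd2, rfl⟩ := (hmemC₁ z).mp hz
    have hs := hwtsplit d
    rw [hwt0 _ hd2] at hs
    have h4 := hDE d hd
    omega
  have hDE₂ : isDoublyEven C₂ := by
    intro z hz
    obtain ⟨d, hd, hd2, rfl⟩ := (hmemC₂ z).mp hz
    have hs := hwtsplit d
    rw [hwt0 _ hd2] at hs
    have h4 := hDE d hd
    omega
  have hx₂0 : p₂ x = 0 := funext fun k => (e₂ k).2
  have hx₁1 : p₁ x = (fun _ => 1) :=
    funext fun k => ((zmod2_cases (x (e₁ k).1)).resolve_left (e₁ k).2)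
  have h1C₁ : (fun _ => 1 : Fin n₁ → ZMod 2) ∈ C₁ := (hmemC₁ _).mpr ⟨x, hx, hx₂0, hx₁1⟩
  have hwt4 : ∀ y ∈ C, ((wt y : ℕ) : ZMod 2) = 0 := by
    intro y hy
    obtain ⟨t, ht⟩ := hDE y hy
    rw [ht]
    push_cast
    rw [show (4 : ZMod 2) = 0 from by decide]
    ring
  have honeC : (fun _ => 1 : Fin (n₁ + n₂) → ZMod 2) ∈ C := by
    rw [← hSD]
    intro y hy
    simp only [one_mul]
    rw [← cast_wt]
    exact hwt4 y hy
  have h1C₂ : (fun _ => 1 : Fin n₂ → ZMod 2) ∈ C₂ := by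
    refine (hmemC₂ _).mpr ⟨x + (fun _ => 1), C.add_mem hx honeC, ?_, ?_⟩
    · rw [map_add, hx₁1]
      funext k
      exact zmod2_add_self 1
    · rw [map_add, hx₂0]
      funext k
      show (0 : ZMod 2) + (1 : ZMod 2) = 1
      rw [zero_add]
  have hext1 : ∀ z : Fin n₁ → ZMod 2, ∃ w : Fin (n₁ + n₂) → ZMod 2,
      p₁ w = z ∧ p₂ w = 0 ∧ ∀ b, ∑ i, w i * b i = ∑ k, z k * p₁ b k := by
    intro z
    set w : Fin (n₁ + n₂) → ZMod 2 :=
      fun i => if h : x i = 0 then 0 else z (e₁.symm ⟨i, h⟩) with hwdef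
    have hw1 : p₁ w = z := by
      funext k
      rw [hp₁, hwdef]
      simp only
      rw [dif_neg (e₁ k).2]
      congr 1
      rw [show (⟨(e₁ k).1, (e₁ k).2⟩ : {i : Fin (n₁ + n₂) // x i ≠ 0}) = e₁ k from
        Subtype.ext rfl, Equiv.symm_apply_apply]
    have hw2 : p₂ w = 0 := by
      funext k
      rw [hp₂, hwdef]
      simp only
      rw [dif_pos (e₂ k).2]
      rfl
    refine ⟨w, hw1, hw2, fun b => ?_⟩
    rw [hdot w b, hw1, hw2]
    simp
  have hext2 : ∀ z : Fin n₂ → ZMod 2, ∃ w : Fin (n₁ + n₂) → ZMod 2,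
      p₂ w = z ∧ p₁ w = 0 ∧ ∀ b, ∑ i, w i * b i = ∑ k, z k * p₂ b k := by
    intro z
    set w : Fin (n₁ + n₂) → ZMod 2 :=
      fun i => if h : x i = 0 then z (e₂.symm ⟨i, h⟩) else 0 with hwdef
    have hw1 : p₂ w = z := by
      funext k
      rw [hp₂, hwdef]
      simp only
      rw [dif_pos (e₂ k).2]
      congr 1
      rw [show (⟨(e₂ k).1, (e₂ k).2⟩ : {i : Fin (n₁ + n₂) // x i = 0}) = e₂ k from
        Subtype.ext rfl, Equiv.symm_apply_apply]
    have hw2 : p₁ w = 0 := by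
      funext k
      rw [hp₁, hwdef]
      simp only
      rw [dif_neg (e₁ k).2]
      rfl
    refine ⟨w, hw1, hw2, fun b => ?_⟩
    rw [hdot w b, hw1, hw2]
    simp
  have hAnn₁ : dualCode (Submodule.map p₁ C) = C₁ := by
    ext z
    constructor
    · intro hz
      obtain ⟨w, hw1, hw2, hw3⟩ := hext1 z
      have hwC : w ∈ C := by
        rw [← hSD]
        intro b hb
        rw [hw3 b]
        exact hz (p₁ b) ⟨b, hb, rfl⟩
      exact (hmemC₁ z).mpr ⟨w, hwC, hw2, hw1⟩
    · intro hz
      obtain ⟨d, hd, hd2, rfl⟩ := (hmemC₁ z).mp hz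
      rintro y ⟨c, hc, rfl⟩
      have h0 : ∑ k, p₂ d k * p₂ c k = 0 := by rw [hd2]; simp
      have hh := hdot d c
      rw [hCdual d hd c hc, h0, add_zero] at hh
      exact hh.symm
  have hAnn₂ : dualCode (Submodule.map p₂ C) = C₂ := by
    ext z
    constructor
    · intro hz
      obtain ⟨w, hw1, hw2, hw3⟩ := hext2 z
      have hwC : w ∈ C := by
        rw [← hSD]
        intro b hb
        rw [hw3 b]
        exact hz (p₂ b) ⟨b, hb, rfl⟩
      exact (hmemC₂ z).mpr ⟨w, hwC, hw2, hw1⟩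
    · intro hz
      obtain ⟨d, hd, hd2, rfl⟩ := (hmemC₂ z).mp hz
      rintro y ⟨c, hc, rfl⟩
      have h0 : ∑ k, p₁ d k * p₁ c k = 0 := by rw [hd2]; simp
      have hh := hdot d c
      rw [hCdual d hd c hc, h0, zero_add] at hh
      exact hh.symm
  have hdual₁ : dualCode C₁ = Submodule.map p₁ C := by rw [← hAnn₁, dual_dual]
  have hdual₂ : dualCode C₂ = Submodule.map p₂ C := by rw [← hAnn₂, dual_dual]
  have item5 : ∀ c ∈ C, p₁ c ∈ dualCode C₁ ∧ p₂ c ∈ dualCode C₂ := by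
    intro c hc
    exact ⟨hdual₁ ▸ Submodule.mem_map_of_mem hc, hdual₂ ▸ Submodule.mem_map_of_mem hc⟩
  refine ⟨hDE₁, hDE₂, h1C₁, h1C₂, item5, ?_⟩
  have hKK : ∀ c ∈ C, (p₁ c ∈ C₁ ↔ p₂ c ∈ C₂) := by
    intro c hc
    constructor
    · intro h
      obtain ⟨d, hd, hd2, hd1⟩ := (hmemC₁ _).mp h
      refine (hmemC₂ _).mpr ⟨c + d, C.add_mem hc hd, ?_, ?_⟩
      · rw [map_add, hd1]
        funext k
        exact zmod2_add_self _
      · rw [map_add, hd2, add_zero]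
    · intro h
      obtain ⟨d, hd, hd2, hd1⟩ := (hmemC₂ _).mp h
      refine (hmemC₁ _).mpr ⟨c + d, C.add_mem hc hd, ?_, ?_⟩
      · rw [map_add, hd1]
        funext k
        exact zmod2_add_self _
      · rw [map_add, hd2, add_zero]
  let φ₁ : ↥C →ₗ[ZMod 2] resQuot C₁ :=
    (Submodule.comap (dualCode C₁).subtype C₁).mkQ.comp
      (LinearMap.codRestrict (dualCode C₁) (p₁.comp C.subtype) (fun c => (item5 c.1 c.2).1))
  let φ₂ : ↥C →ₗ[ZMod 2] resQuot C₂ :=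
    (Submodule.comap (dualCode C₂).subtype C₂).mkQ.comp
      (LinearMap.codRestrict (dualCode C₂) (p₂.comp C.subtype) (fun c => (item5 c.1 c.2).2))
  have hφ₁ : ∀ (c : ↥C) (h : p₁ c.1 ∈ dualCode C₁),
      φ₁ c = Submodule.Quotient.mk ⟨p₁ c.1, h⟩ := fun c h => rfl
  have hφ₂ : ∀ (c : ↥C) (h : p₂ c.1 ∈ dualCode C₂),
      φ₂ c = Submodule.Quotient.mk ⟨p₂ c.1, h⟩ := fun c h => rfl
  have hφ₁surj : Function.Surjective φ₁ := by
    intro q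
    obtain ⟨z, rfl⟩ := Submodule.Quotient.mk_surjective _ q
    have hz2 : z.1 ∈ Submodule.map p₁ C := by rw [← hdual₁]; exact z.2
    obtain ⟨c, hc, hcz⟩ := hz2
    refine ⟨⟨c, hc⟩, ?_⟩
    rw [hφ₁ ⟨c, hc⟩ ((item5 c hc).1)]
    congr 1
    exact Subtype.ext hcz
  have hφ₂surj : Function.Surjective φ₂ := by
    intro q
    obtain ⟨z, rfl⟩ := Submodule.Quotient.mk_surjective _ q
    have hz2 : z.1 ∈ Submodule.map p₂ C := by rw [← hdual₂]; exact z.2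
    obtain ⟨c, hc, hcz⟩ := hz2
    refine ⟨⟨c, hc⟩, ?_⟩
    rw [hφ₂ ⟨c, hc⟩ ((item5 c hc).2)]
    congr 1
    exact Subtype.ext hcz
  have hφ₁ker : ∀ c : ↥C, (φ₁ c = 0 ↔ p₁ c.1 ∈ C₁) := by
    intro c
    rw [hφ₁ c ((item5 c.1 c.2).1), Submodule.Quotient.mk_eq_zero]
    exact Iff.rfl
  have hφ₂ker : ∀ c : ↥C, (φ₂ c = 0 ↔ p₂ c.1 ∈ C₂) := by
    intro c
    rw [hφ₂ c ((item5 c.1 c.2).2), Submodule.Quotient.mk_eq_zero]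
    exact Iff.rfl
  have hkereq : LinearMap.ker φ₁ = LinearMap.ker φ₂ := by
    ext c
    rw [LinearMap.mem_ker, LinearMap.mem_ker, hφ₁ker c, hφ₂ker c]
    exact hKK c.1 c.2
  let iso₁ := φ₁.quotKerEquivOfSurjective hφ₁surj
  let iso₂ := φ₂.quotKerEquivOfSurjective hφ₂surj
  have hiso₁ : ∀ c : ↥C, iso₁ (Submodule.Quotient.mk c) = φ₁ c := fun c => rfl
  have hiso₂ : ∀ c : ↥C, iso₂ (Submodule.Quotient.mk c) = φ₂ c := fun c => rfl
  let f : resQuot C₁ ≃ₗ[ZMod 2] resQuot C₂ :=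
    iso₁.symm.trans ((Submodule.quotEquivOfEq _ _ hkereq).trans iso₂)
  have fprop : ∀ c : ↥C, f (φ₁ c) = φ₂ c := by
    intro c
    show iso₂ ((Submodule.quotEquivOfEq _ _ hkereq) (iso₁.symm (φ₁ c))) = φ₂ c
    have h1 : iso₁.symm (φ₁ c) = Submodule.Quotient.mk c := by
      rw [← hiso₁ c, LinearEquiv.symm_apply_apply]
    rw [h1, Submodule.quotEquivOfEq_mk, hiso₂]
  have fmk : ∀ c ∈ C, ∀ (h₁ : p₁ c ∈ dualCode C₁) (h₂ : p₂ c ∈ dualCode C₂),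
      f (Submodule.Quotient.mk ⟨p₁ c, h₁⟩) = Submodule.Quotient.mk ⟨p₂ c, h₂⟩ := by
    intro c hc h₁ h₂
    have hh := fprop ⟨c, hc⟩
    rw [hφ₁ ⟨c, hc⟩ h₁, hφ₂ ⟨c, hc⟩ h₂] at hh
    exact hh
  clear_value f iso₁ iso₂ φ₁ φ₂
  have key : ∀ (x₁ : ↥(dualCode C₁)) (y : ↥(dualCode C₂)),
      f (Submodule.Quotient.mk x₁) = Submodule.Quotient.mk y →
      ∃ c ∈ C, p₁ c = x₁.1 ∧ p₂ c = y.1 := by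
    intro x₁ y hf
    have hz2 : x₁.1 ∈ Submodule.map p₁ C := by rw [← hdual₁]; exact x₁.2
    obtain ⟨c, hc, hcx⟩ := hz2
    have hx₁eq : x₁ = ⟨p₁ c, (item5 c hc).1⟩ := Subtype.ext hcx.symm
    rw [hx₁eq, fmk c hc ((item5 c hc).1) ((item5 c hc).2)] at hf
    rw [Submodule.Quotient.eq] at hf
    have hf' : p₂ c - y.1 ∈ C₂ := hf
    obtain ⟨d, hd, hd1, hd2⟩ := (hmemC₂ _).mp hf'
    refine ⟨c - d, C.sub_mem hc hd, ?_, ?_⟩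
    · rw [map_sub, hd1, sub_zero, hcx]
    · rw [map_sub, hd2, sub_sub_cancel]
  have heven₁ : ∀ z : Fin n₁ → ZMod 2, z ∈ dualCode C₁ → 2 ∣ wt z := by
    intro z hz
    have h0 := hz _ h1C₁
    rw [← ZMod.natCast_eq_zero_iff, cast_wt]
    simpa using h0
  have heven₂ : ∀ z : Fin n₂ → ZMod 2, z ∈ dualCode C₂ → 2 ∣ wt z := by
    intro z hz
    have h0 := hz _ h1C₂
    rw [← ZMod.natCast_eq_zero_iff, cast_wt]
    simpa using h0
  refine ⟨f, ?_, ?_, ?_⟩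
  · intro x₁ y hf
    obtain ⟨c, hc, h1, h2⟩ := key x₁ y hf
    have hs := hwtsplit c
    rw [h1, h2] at hs
    have h4 := hDE c hc
    have e1 := heven₁ x₁.1 x₁.2
    have e2 := heven₂ y.1 y.2
    show wt x₁.1 / 2 % 2 = wt y.1 / 2 % 2
    omega
  · intro c hc h₁ h₂
    exact fmk c hc h₁ h₂
  · refine ⟨(suppEquiv x).symm.trans ((e₁.symm.sumCongr e₂.symm).trans finSumFinEquiv), ?_⟩
    set σ : Equiv.Perm (Fin (n₁ + n₂)) :=
      (suppEquiv x).symm.trans ((e₁.symm.sumCongr e₂.symm).trans finSumFinEquiv) with hσdef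
    have hcompat : ∀ c : Fin (n₁ + n₂) → ZMod 2,
        permMap σ (Fin.append (p₁ c) (p₂ c)) = c := by
      intro c
      funext i
      show Fin.append (p₁ c) (p₂ c) (σ i) = c i
      by_cases h : x i = 0
      · have hs : (suppEquiv x).symm i = Sum.inr ⟨i, h⟩ := by
          simp [suppEquiv, h]
        have hσ : σ i = Fin.natAdd n₁ (e₂.symm ⟨i, h⟩) := by
          rw [hσdef]
          rw [Equiv.trans_apply, Equiv.trans_apply, hs]
          rw [Equiv.sumCongr_apply, Sum.map_inr, finSumFinEquiv_apply_right]
        rw [hσ, Fin.append_right, hp₂, Equiv.apply_symm_apply]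
      · have hs : (suppEquiv x).symm i = Sum.inl ⟨i, h⟩ := by
          simp [suppEquiv, h]
        have hσ : σ i = Fin.castAdd n₂ (e₁.symm ⟨i, h⟩) := by
          rw [hσdef]
          rw [Equiv.trans_apply, Equiv.trans_apply, hs]
          rw [Equiv.sumCongr_apply, Sum.map_inl, finSumFinEquiv_apply_left]
        rw [hσ, Fin.append_left, hp₁, Equiv.apply_symm_apply]
    apply Set.ext
    intro w
    constructor
    · rintro ⟨z, ⟨x₁, y, hfxy, rfl⟩, rfl⟩
      obtain ⟨c, hc, h1, h2⟩ := key x₁ y hfxy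
      have happ : Fin.append x₁.1 y.1 = Fin.append (p₁ c) (p₂ c) := by rw [h1, h2]
      rw [happ, hcompat]
      exact hc
    · intro hw
      exact ⟨Fin.append (p₁ w) (p₂ w),
        ⟨⟨p₁ w, (item5 w hw).1⟩, ⟨p₂ w, (item5 w hw).2⟩, fmk w hw _ _, rfl⟩, hcompat w⟩
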